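/- Let d ∈ N, let T : [−1,1]^d → [−1,1]^{d+1} be a Lipschitz function with Lipschitz constant 1 such that at every point x ∈ (−1,1)^d where T is differentiable its derivative is nonzero, and let φ ∈ L^∞([−1,1]^d) be non-negative with ∫ φ dλ > 0 (λ denoting Lebesgue measure). Then there exist δ > 0, x ∈ [−1,1]^d and w ∈ S^d ⊂ R^{d+1} such that for every sufficiently small ε > 0 there exists y ∈ [−1,1]^d with the following three properties: (r-i) ‖(T(y) − T(x))/‖T(y) − T(x)‖₂ − w‖₂ < ε; (r-ii) for every t ∈ [0,1], ‖T((1−t)x + ty) − [(1−t)T(x) + tT(y)]‖₂ < ε‖y − x‖₂; (r-iii) letting K_R = {(1−t)x + ty : t ∈ [0,1]} + B(0, ε‖y − x‖₂) (the Minkowski sum with the closed Euclidean ball of radius ε‖y − x‖₂ centered at the origin in R^d), one has (1/λ(K_R)) ∫_{K_R} φ dλ > δ. -/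

import Mathlib

open Set MeasureTheory
open scoped ENNReal NNReal Topology
set_option maxHeartbeats 2000000

lemma aux_unit_sub_unit {F : Type*} [NormedAddCommGroup F] [NormedSpace ℝ F]
    {u z : F} (hu : u ≠ 0) (hz : z ≠ 0) :
    ‖‖u‖⁻¹ • u - ‖z‖⁻¹ • z‖ ≤ 2 * ‖u - z‖ / ‖u‖ := by
  have hu' : (0:ℝ) < ‖u‖ := norm_pos_iff.2 hu
  have hz' : (0:ℝ) < ‖z‖ := norm_pos_iff.2 hz
  have key : ‖u‖⁻¹ • u - ‖z‖⁻¹ • z = ‖u‖⁻¹ • (u - z) + (‖u‖⁻¹ - ‖z‖⁻¹) • z := by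
    module
  rw [key]
  have h1 : ‖‖u‖⁻¹ • (u - z)‖ = ‖u - z‖ / ‖u‖ := by
    rw [norm_smul, Real.norm_eq_abs, abs_of_nonneg (by positivity)]
    ring
  have h2 : ‖(‖u‖⁻¹ - ‖z‖⁻¹) • z‖ ≤ ‖u - z‖ / ‖u‖ := by
    rw [norm_smul, Real.norm_eq_abs]
    have : ‖u‖⁻¹ - ‖z‖⁻¹ = (‖z‖ - ‖u‖) / (‖u‖ * ‖z‖) := by
      field_simp
    rw [this, abs_div, abs_of_nonneg (by positivity : (0:ℝ) ≤ ‖u‖ * ‖z‖)]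
    have habs : |‖z‖ - ‖u‖| ≤ ‖u - z‖ := by
      rw [← norm_neg (u - z)]
      simpa [neg_sub] using abs_norm_sub_norm_le (z) (u)
    calc |‖z‖ - ‖u‖| / (‖u‖ * ‖z‖) * ‖z‖ = |‖z‖ - ‖u‖| / ‖u‖ := by field_simp
      _ ≤ ‖u - z‖ / ‖u‖ := by gcongr
  calc ‖‖u‖⁻¹ • (u - z) + (‖u‖⁻¹ - ‖z‖⁻¹) • z‖ ≤ ‖‖u‖⁻¹ • (u - z)‖ + ‖(‖u‖⁻¹ - ‖z‖⁻¹) • z‖ :=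
        norm_add_le _ _
    _ ≤ ‖u - z‖ / ‖u‖ + ‖u - z‖ / ‖u‖ := by rw [h1]; gcongr
    _ = 2 * ‖u - z‖ / ‖u‖ := by ring

lemma aux_hyperplane_null (d : ℕ) (i : Fin d) (c : ℝ) :
    volume {x : EuclideanSpace ℝ (Fin d) | x i = c} = 0 := by
  have e := EuclideanSpace.volume_preserving_symm_measurableEquiv_toLp (Fin d)
  have hH : (volume : Measure (Fin d → ℝ)) {y | y i = c} = 0 := by
    rw [volume_pi]
    exact Measure.pi_hyperplane (fun _ => (volume : Measure ℝ)) i c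
  have h2 : {x : EuclideanSpace ℝ (Fin d) | x i = c}
      = (MeasurableEquiv.toLp 2 (Fin d → ℝ)).symm ⁻¹' {y | y i = c} := rfl
  rw [h2, e.measure_preimage
    ((measurableSet_eq_fun (measurable_pi_apply i) measurable_const).nullMeasurableSet)]
  exact hH

lemma aux_boundary_null (d : ℕ) :
    volume ({x : EuclideanSpace ℝ (Fin d) | ∀ i, x i ∈ Icc (-1 : ℝ) 1}
      \ {x : EuclideanSpace ℝ (Fin d) | ∀ i, x i ∈ Ioo (-1 : ℝ) 1}) = 0 := by
  have hsub : {x : EuclideanSpace ℝ (Fin d) | ∀ i, x i ∈ Icc (-1 : ℝ) 1}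
      \ {x | ∀ i, x i ∈ Ioo (-1 : ℝ) 1}
      ⊆ ⋃ i : Fin d, ({x : EuclideanSpace ℝ (Fin d) | x i = -1} ∪ {x | x i = 1}) := by
    rintro x ⟨hx, hnx⟩
    simp only [mem_setOf_eq] at hnx
    push_neg at hnx
    obtain ⟨i, hi⟩ := hnx
    refine mem_iUnion.2 ⟨i, ?_⟩
    have h1 := hx i
    rcases eq_or_lt_of_le h1.1 with h | h
    · exact Or.inl h.symm
    rcases eq_or_lt_of_le h1.2 with h' | h'
    · exact Or.inr h'
    · exact absurd ⟨h, h'⟩ hi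
  refine measure_mono_null hsub ?_
  refine (measure_iUnion_null fun i => ?_)
  exact measure_union_null (aux_hyperplane_null d i (-1)) (aux_hyperplane_null d i 1)

lemma aux_isOpen_U (d : ℕ) :
    IsOpen {x : EuclideanSpace ℝ (Fin d) | ∀ i, x i ∈ Ioo (-1 : ℝ) 1} := by
  have : {x : EuclideanSpace ℝ (Fin d) | ∀ i, x i ∈ Ioo (-1 : ℝ) 1}
      = ⋂ i, (fun x : EuclideanSpace ℝ (Fin d) => x i) ⁻¹' Ioo (-1:ℝ) 1 := by
    ext x; simp
  rw [this]
  exact isOpen_iInter_of_finite fun i =>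
    (isOpen_Ioo).preimage (EuclideanSpace.proj i).continuous

lemma aux_exists_level (d : ℕ)
    (φ : EuclideanSpace ℝ (Fin d) → ℝ)
    (hφnonneg : ∀ x, 0 ≤ φ x)
    (hφpos : 0 < ∫ x in {x : EuclideanSpace ℝ (Fin d) | ∀ i, x i ∈ Icc (-1 : ℝ) 1}, φ x) :
    ∃ a : ℝ, 0 < a ∧
      0 < volume ({x | a ≤ φ x} ∩ {x : EuclideanSpace ℝ (Fin d) | ∀ i, x i ∈ Ioo (-1 : ℝ) 1}) := by
  set Q := {x : EuclideanSpace ℝ (Fin d) | ∀ i, x i ∈ Icc (-1 : ℝ) 1} with hQdef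
  set U := {x : EuclideanSpace ℝ (Fin d) | ∀ i, x i ∈ Ioo (-1 : ℝ) 1} with hUdef
  have hUQ : U ⊆ Q := fun x hx i => ⟨(hx i).1.le, (hx i).2.le⟩
  have hae : Q =ᵐ[volume] U := by
    rw [MeasureTheory.ae_eq_set]
    constructor
    · exact aux_boundary_null d
    · rw [diff_eq_empty.2 hUQ]; simp
  have hUpos : 0 < ∫ x in U, φ x := by
    rwa [setIntegral_congr_set hae] at hφpos
  by_contra hcon
  push_neg at hcon
  have hnull : ∀ n : ℕ, volume ({x | 1/((n:ℝ)+1) ≤ φ x} ∩ U) = 0 := by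
    intro n
    have := hcon (1/((n:ℝ)+1)) (by positivity)
    exact le_antisymm this zero_le
  have hposnull : volume ({x | 0 < φ x} ∩ U) = 0 := by
    have hsub : {x | 0 < φ x} ∩ U ⊆ ⋃ n : ℕ, ({x | 1/((n:ℝ)+1) ≤ φ x} ∩ U) := by
      rintro x ⟨hx, hxU⟩
      obtain ⟨n, hn⟩ := exists_nat_one_div_lt (show (0:ℝ) < φ x from hx)
      exact mem_iUnion.2 ⟨n, hn.le, hxU⟩
    exact measure_mono_null hsub (measure_iUnion_null hnull)
  have hzero : ∫ x in U, φ x = 0 := by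
    have hU : MeasurableSet U := (aux_isOpen_U d).measurableSet
    refine integral_eq_zero_of_ae ?_
    rw [Filter.EventuallyEq, ae_restrict_iff' hU]
    simp only [Pi.zero_apply]
    have : ∀ᵐ x ∂(volume : Measure (EuclideanSpace ℝ (Fin d))),
        x ∉ {x | 0 < φ x} ∩ U := by
      rw [← compl_mem_ae_iff] at hposnull
      exact hposnull
    filter_upwards [this] with x hx hxU
    by_contra hne
    exact hx ⟨lt_of_le_of_ne (hφnonneg x) (Ne.symm hne), hxU⟩
  rw [hzero] at hUpos
  exact lt_irrefl 0 hUpos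

lemma aux_tube_eq {E : Type*} [NormedAddCommGroup E] [NormedSpace ℝ E]
    (x y : E) (r : ℝ) :
    {p : E | ∃ t ∈ Icc (0:ℝ) 1, ‖p - ((1-t) • x + t • y)‖ ≤ r}
      = (fun q : ℝ × E => x + q.1 • (y - x) + q.2) '' (Icc (0:ℝ) 1 ×ˢ Metric.closedBall 0 r) := by
  ext p
  simp only [mem_setOf_eq, mem_image, mem_prod, Metric.mem_closedBall, dist_zero_right]
  constructor
  · rintro ⟨t, ht, hp⟩
    refine ⟨(t, p - (x + t • (y - x))), ⟨ht, ?_⟩, by module⟩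
    have : (1-t) • x + t • y = x + t • (y - x) := by module
    rw [this] at hp
    simpa using hp
  · rintro ⟨⟨t, u⟩, ⟨ht, hu⟩, rfl⟩
    refine ⟨t, ht, ?_⟩
    have : (1-t) • x + t • y = x + t • (y - x) := by module
    rw [this]
    simpa using hu

lemma aux_tube_compact (d : ℕ) (x y : EuclideanSpace ℝ (Fin d)) (r : ℝ) :
    IsCompact {p : EuclideanSpace ℝ (Fin d) | ∃ t ∈ Icc (0:ℝ) 1, ‖p - ((1-t) • x + t • y)‖ ≤ r} := by
  rw [aux_tube_eq]
  refine (isCompact_Icc.prod (isCompact_closedBall 0 r)).image ?_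
  fun_prop

theorem continuous_version
    (d : ℕ) (hd : 0 < d)
    (T : EuclideanSpace ℝ (Fin d) → EuclideanSpace ℝ (Fin (d + 1)))
    (hmaps : ∀ x : EuclideanSpace ℝ (Fin d),
      (∀ i, x i ∈ Icc (-1 : ℝ) 1) → ∀ i, T x i ∈ Icc (-1 : ℝ) 1)
    (hlip : ∀ x y : EuclideanSpace ℝ (Fin d),
      (∀ i, x i ∈ Icc (-1 : ℝ) 1) → (∀ i, y i ∈ Icc (-1 : ℝ) 1) → ‖T x - T y‖ ≤ ‖x - y‖)
    (hderiv : ∀ x : EuclideanSpace ℝ (Fin d), (∀ i, x i ∈ Ioo (-1 : ℝ) 1) →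
      ∀ L : EuclideanSpace ℝ (Fin d) →L[ℝ] EuclideanSpace ℝ (Fin (d + 1)),
        HasFDerivAt T L x → L ≠ 0)
    (φ : EuclideanSpace ℝ (Fin d) → ℝ)
    (hφmeas : Measurable φ) (hφnonneg : ∀ x, 0 ≤ φ x)
    (hφbdd : ∃ C : ℝ, ∀ x, φ x ≤ C)
    (hφsupp : ∀ x : EuclideanSpace ℝ (Fin d), ¬ (∀ i, x i ∈ Icc (-1 : ℝ) 1) → φ x = 0)
    (hφpos : 0 < ∫ x in {x : EuclideanSpace ℝ (Fin d) | ∀ i, x i ∈ Icc (-1 : ℝ) 1}, φ x) :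
    ∃ δ : ℝ, 0 < δ ∧
    ∃ x : EuclideanSpace ℝ (Fin d), (∀ i, x i ∈ Icc (-1 : ℝ) 1) ∧
    ∃ w : EuclideanSpace ℝ (Fin (d + 1)), ‖w‖ = 1 ∧
    ∃ ε₀ : ℝ, 0 < ε₀ ∧ ∀ ε : ℝ, 0 < ε → ε < ε₀ →
      ∃ y : EuclideanSpace ℝ (Fin d), (∀ i, y i ∈ Icc (-1 : ℝ) 1) ∧
        -- (r-i)
        ‖‖T y - T x‖⁻¹ • (T y - T x) - w‖ < ε ∧
        -- (r-ii)
        (∀ t ∈ Icc (0 : ℝ) 1,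
          ‖T ((1 - t) • x + t • y) - ((1 - t) • T x + t • T y)‖ < ε * ‖y - x‖) ∧
        -- (r-iii)
        (δ < (∫ u in {p : EuclideanSpace ℝ (Fin d) |
                ∃ t ∈ Icc (0 : ℝ) 1, ‖p - ((1 - t) • x + t • y)‖ ≤ ε * ‖y - x‖}, φ u) /
              (volume {p : EuclideanSpace ℝ (Fin d) |
                ∃ t ∈ Icc (0 : ℝ) 1, ‖p - ((1 - t) • x + t • y)‖ ≤ ε * ‖y - x‖}).toReal) := by
  classical
  set Q := {x : EuclideanSpace ℝ (Fin d) | ∀ i, x i ∈ Icc (-1 : ℝ) 1} with hQdef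
  set U := {x : EuclideanSpace ℝ (Fin d) | ∀ i, x i ∈ Ioo (-1 : ℝ) 1} with hUdef
  have hUQ : U ⊆ Q := fun x hx i => ⟨(hx i).1.le, (hx i).2.le⟩
  have hUopen : IsOpen U := aux_isOpen_U d
  -- level set
  obtain ⟨a, ha, hEapos⟩ := aux_exists_level d φ hφnonneg hφpos
  set Ea := {x | a ≤ φ x} ∩ U with hEadef
  have hEameas : MeasurableSet Ea :=
    (measurableSet_le measurable_const hφmeas).inter hUopen.measurableSet
  -- Lipschitz on Q
  have hlipOn : LipschitzOnWith 1 T Q := by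
    refine LipschitzOnWith.of_dist_le_mul fun p hp q hq => ?_
    rw [dist_eq_norm, dist_eq_norm]
    simpa using hlip p q hp hq
  -- a.e. properties
  have hrad := hlipOn.ae_differentiableWithinAt_of_mem (μ := (volume : Measure (EuclideanSpace ℝ (Fin d))))
  have hdens := Besicovitch.ae_tendsto_measure_inter_div_of_measurableSet
    (volume : Measure (EuclideanSpace ℝ (Fin d))) hEameas
  have hboth := hrad.and hdens
  -- pick a good point x
  have hres : ∀ᵐ x ∂(volume.restrict Ea), x ∈ Ea := ae_restrict_mem hEameas
  have hcomb := (ae_restrict_of_ae hboth).and hres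
  have hne : (volume.restrict Ea) ≠ 0 := by
    rw [Ne, Measure.restrict_eq_zero]
    exact hEapos.ne'
  haveI : (ae (volume.restrict Ea)).NeBot := ae_neBot.2 hne
  obtain ⟨x, ⟨hxdiff, hxdens⟩, hxEa⟩ := hcomb.exists
  have hxU : x ∈ U := hxEa.2
  have hxQ : x ∈ Q := hUQ hxU
  have hxφ : a ≤ φ x := hxEa.1
  -- differentiability at x
  have hQnbhd : Q ∈ nhds x := Filter.mem_of_superset (hUopen.mem_nhds hxU) hUQ
  have hdiff : DifferentiableAt ℝ T x := (hxdiff hxQ).differentiableAt hQnbhd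
  set L := fderiv ℝ T x with hLdef
  have hL : HasFDerivAt T L x := hdiff.hasFDerivAt
  have hLne : L ≠ 0 := hderiv x hxU L hL
  obtain ⟨v0, hv0⟩ : ∃ v0, L v0 ≠ 0 := by
    by_contra hcon
    push_neg at hcon
    exact hLne (ContinuousLinearMap.ext fun v => by simp [hcon v])
  have hv0ne : v0 ≠ 0 := fun h => hv0 (by simp [h])
  set v : EuclideanSpace ℝ (Fin d) := ‖v0‖⁻¹ • v0 with hvdef
  have hv : ‖v‖ = 1 := norm_smul_inv_norm hv0ne
  have hLv : L v ≠ 0 := by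
    rw [hvdef, L.map_smul]
    exact smul_ne_zero (inv_ne_zero (norm_ne_zero_iff.2 hv0ne)) hv0
  set m : ℝ := ‖L v‖ with hmdef
  have hm : 0 < m := norm_pos_iff.2 hLv
  set w : EuclideanSpace ℝ (Fin (d+1)) := m⁻¹ • L v with hwdef
  have hw : ‖w‖ = 1 := norm_smul_inv_norm hLv
  -- density at x
  have hxind : Ea.indicator (1 : EuclideanSpace ℝ (Fin d) → ℝ≥0∞) x = 1 :=
    indicator_of_mem hxEa 1
  rw [hxind] at hxdens
  refine ⟨a/4, by positivity, x, hxQ, w, hw, 1, one_pos, ?_⟩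
  intro ε hε hε1
  -- constants
  set η : ℝ := min (ε * m / 8) (min (ε / 3) (m / 2)) with hηdef
  have hηpos : 0 < η := lt_min (by positivity) (lt_min (by positivity) (by positivity))
  have hη1 : η ≤ ε * m / 8 := min_le_left _ _
  have hη2 : η ≤ ε / 3 := (min_le_right _ _).trans (min_le_left _ _)
  have hη3 : η ≤ m / 2 := (min_le_right _ _).trans (min_le_right _ _)
  -- little-o control
  have hiso : (fun h => T (x + h) - T x - L h) =o[nhds 0] fun h => h :=
    hasFDerivAt_iff_isLittleO_nhds_zero.1 hL
  have hev := hiso.def hηpos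
  rw [Metric.eventually_nhds_iff] at hev
  obtain ⟨s₁, hs₁pos, hs₁⟩ := hev
  -- openness control
  obtain ⟨s₀, hs₀pos, hs₀⟩ := Metric.isOpen_iff.1 hUopen x hxU
  -- density control
  set c : ℝ := min ((ε / 2) ^ d / 2) (1 / 2) with hcdef
  have hcpos : 0 < c := lt_min (by positivity) (by norm_num)
  have hc1 : c ≤ 1 := (min_le_right _ _).trans (by norm_num)
  have hcd : c ≤ (ε / 2) ^ d / 2 := min_le_left _ _
  have hcIoi : Ioi (1 - ENNReal.ofReal c) ∈ nhds (1 : ℝ≥0∞) :=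
    Ioi_mem_nhds (ENNReal.sub_lt_self ENNReal.one_ne_top one_ne_zero
      (ENNReal.ofReal_pos.2 hcpos).ne')
  obtain ⟨s₂, hs₂pos, hs₂⟩ := mem_nhdsGT_iff_exists_Ioc_subset.1 (hxdens hcIoi)
  have hs₂' : 0 < s₂ := hs₂pos
  -- the scale s
  set s : ℝ := min (s₀ / 2) (min (s₁ / 2) (s₂ / 2)) with hsdef
  have hspos : 0 < s := lt_min (half_pos hs₀pos) (lt_min (half_pos hs₁pos) (half_pos hs₂'))
  have hss0 : s < s₀ := (min_le_left _ _).trans_lt (by linarith)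
  have hss1 : s < s₁ := ((min_le_right _ _).trans (min_le_left _ _)).trans_lt (by linarith)
  have h2s : 2 * s ≤ s₂ := by
    have := (min_le_right (s₀/2) _).trans (min_le_right (s₁/2) (s₂/2))
    linarith
  set y := x + s • v with hydef
  have hyx : y - x = s • v := by rw [hydef]; abel
  have hnyx : ‖y - x‖ = s := by
    rw [hyx, norm_smul, hv, Real.norm_eq_abs, abs_of_pos hspos, mul_one]
  have hyU : y ∈ U := hs₀ (by rw [Metric.mem_ball, dist_eq_norm, hnyx]; exact hss0)
  have hyQ : y ∈ Q := hUQ hyU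
  -- key differential estimates
  have hLsv : L (s • v) = s • L v := L.map_smul s v
  have key1 : ‖T y - T x - s • L v‖ ≤ η * s := by
    have hd1 : dist (s • v) (0 : EuclideanSpace ℝ (Fin d)) < s₁ := by
      rw [dist_zero_right, norm_smul, hv, Real.norm_eq_abs, abs_of_pos hspos, mul_one]
      exact hss1
    have := hs₁ hd1
    rw [hLsv] at this
    calc ‖T y - T x - s • L v‖ = ‖T (x + s • v) - T x - s • L v‖ := by rw [← hydef]
      _ ≤ η * ‖s • v‖ := this
      _ = η * s := by rw [norm_smul, hv, Real.norm_eq_abs, abs_of_pos hspos, mul_one]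
  set u := T y - T x with hudef
  set z := s • L v with hzdef
  have huz : ‖u - z‖ ≤ η * s := key1
  have hz_norm : ‖z‖ = s * m := by
    rw [hzdef, norm_smul, Real.norm_eq_abs, abs_of_pos hspos, hmdef]
  have hz_ne : z ≠ 0 := by
    rw [← norm_pos_iff, hz_norm]; positivity
  have hu_lb : s * m / 2 ≤ ‖u‖ := by
    have h1 : ‖z‖ - ‖u‖ ≤ ‖u - z‖ := (norm_sub_norm_le z u).trans (norm_sub_rev z u).le
    have h2 : η * s ≤ m / 2 * s := mul_le_mul_of_nonneg_right hη3 hspos.le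
    rw [hz_norm] at h1
    linarith
  have hsm : 0 < s * m := mul_pos hspos hm
  have hu_ne : u ≠ 0 := by
    rw [← norm_pos_iff]; linarith
  have hunitz : ‖z‖⁻¹ • z = w := by
    have hsc : (s * m)⁻¹ * s = m⁻¹ := by field_simp
    rw [hz_norm, hzdef, smul_smul, hsc, hwdef]
  refine ⟨y, hyQ, ?_, ?_, ?_⟩
  · -- (r-i)
    calc ‖‖u‖⁻¹ • u - w‖ = ‖‖u‖⁻¹ • u - ‖z‖⁻¹ • z‖ := by rw [hunitz]
      _ ≤ 2 * ‖u - z‖ / ‖u‖ := aux_unit_sub_unit hu_ne hz_ne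
      _ ≤ 2 * (η * s) / (s * m / 2) := by
          apply div_le_div₀ (by positivity) (by linarith) (by positivity) hu_lb
      _ = 4 * η / m := by field_simp; ring
      _ ≤ ε / 2 := by
          rw [div_le_iff₀ hm]; nlinarith
      _ < ε := half_lt_self hε
  · -- (r-ii)
    intro t ht
    obtain ⟨ht0, ht1⟩ := ht
    have hts0 : 0 ≤ t * s := by positivity
    have htss : t * s ≤ s := by nlinarith
    have hp : (1 - t) • x + t • y = x + (t * s) • v := by rw [hydef]; module
    have hnts : ‖(t * s) • v‖ = t * s := by
      rw [norm_smul, hv, Real.norm_eq_abs, abs_of_nonneg hts0, mul_one]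
    have key2 : ‖T (x + (t * s) • v) - T x - (t * s) • L v‖ ≤ η * (t * s) := by
      have hd2 : dist ((t * s) • v) (0 : EuclideanSpace ℝ (Fin d)) < s₁ := by
        rw [dist_zero_right, hnts]; linarith
      have := hs₁ hd2
      rw [L.map_smul, hnts] at this
      exact this
    have hvec : T ((1 - t) • x + t • y) - ((1 - t) • T x + t • T y)
        = (T (x + (t * s) • v) - T x - (t * s) • L v) - t • (u - z) := by
      rw [hp, hudef, hzdef]; module
    rw [hvec, hnyx]
    calc ‖(T (x + (t * s) • v) - T x - (t * s) • L v) - t • (u - z)‖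
        ≤ ‖T (x + (t * s) • v) - T x - (t * s) • L v‖ + ‖t • (u - z)‖ := norm_sub_le _ _
      _ ≤ η * (t * s) + t * (η * s) := by
          refine add_le_add key2 ?_
          rw [norm_smul, Real.norm_eq_abs, abs_of_nonneg ht0]
          exact mul_le_mul_of_nonneg_left huz ht0
      _ ≤ 2 * η * s := by nlinarith
      _ < ε * s := by nlinarith
  · -- (r-iii)
    set r : ℝ := ε * ‖y - x‖ with hrdef
    have hr : r = ε * s := by rw [hrdef, hnyx]
    have hrpos : 0 < r := by rw [hr]; positivity
    set K := {p : EuclideanSpace ℝ (Fin d) |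
      ∃ t ∈ Icc (0:ℝ) 1, ‖p - ((1 - t) • x + t • y)‖ ≤ r} with hKdef
    have hKcomp : IsCompact K := aux_tube_compact d x y r
    have hKmeas : MeasurableSet K := hKcomp.measurableSet
    have hballK : Metric.closedBall x r ⊆ K := by
      intro p hp
      refine ⟨0, ⟨le_refl 0, zero_le_one⟩, ?_⟩
      have h0 : (1 - (0:ℝ)) • x + (0:ℝ) • y = x := by module
      rw [h0]
      rw [Metric.mem_closedBall, dist_eq_norm] at hp
      exact hp
    have hKB : K ⊆ Metric.closedBall x (2 * s) := by
      rintro p ⟨t, ⟨ht0, ht1⟩, hpt⟩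
      rw [Metric.mem_closedBall, dist_eq_norm]
      have h1 : (1 - t) • x + t • y = x + (t * s) • v := by rw [hydef]; module
      have h2 : p - x = (p - ((1 - t) • x + t • y)) + (t * s) • v := by rw [h1]; module
      have h3 : ‖(t * s) • v‖ = t * s := by
        rw [norm_smul, hv, Real.norm_eq_abs, abs_of_nonneg (by positivity), mul_one]
      calc ‖p - x‖ ≤ ‖p - ((1 - t) • x + t • y)‖ + ‖(t * s) • v‖ := by
            rw [h2]; exact norm_add_le _ _
        _ ≤ r + t * s := add_le_add hpt h3.le
        _ ≤ 2 * s := by rw [hr]; nlinarith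
    have hfinrk : Module.finrank ℝ (EuclideanSpace ℝ (Fin d)) = d := finrank_euclideanSpace_fin
    set vb := volume (Metric.ball (0 : EuclideanSpace ℝ (Fin d)) 1) with hvbdef
    have hvb0 : vb ≠ 0 := (Metric.measure_ball_pos volume 0 one_pos).ne'
    have hvbt : vb ≠ ⊤ := measure_ball_lt_top.ne
    have hBallr : volume (Metric.closedBall x r) = ENNReal.ofReal (r ^ d) * vb := by
      have h := Measure.addHaar_closedBall (volume : Measure (EuclideanSpace ℝ (Fin d))) x hrpos.le
      rwa [hfinrk, ← hvbdef] at h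
    have hKlb : ENNReal.ofReal (r ^ d) * vb ≤ volume K := by
      rw [← hBallr]
      exact measure_mono hballK
    set B := Metric.closedBall x (2 * s) with hBdef
    have hBvol : volume B = ENNReal.ofReal ((2 * s) ^ d) * vb := by
      have h := Measure.addHaar_closedBall (volume : Measure (EuclideanSpace ℝ (Fin d))) x
        (show (0:ℝ) ≤ 2 * s by positivity)
      rwa [hfinrk, ← hvbdef] at h
    have hKfin : volume K ≠ ⊤ := (lt_of_le_of_lt (measure_mono hKB) measure_closedBall_lt_top).ne
    have hBpos : volume B ≠ 0 := (Metric.measure_closedBall_pos volume x (by positivity)).ne'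
    have hBfin : volume B ≠ ⊤ := measure_closedBall_lt_top.ne
    -- density estimate at radius 2s
    have hratio := hs₂ ⟨by positivity, h2s⟩
    simp only [mem_preimage, mem_Ioi] at hratio
    have hIlb : (1 - ENNReal.ofReal c) * volume B ≤ volume (Ea ∩ B) := by
      exact ((ENNReal.lt_div_iff_mul_lt (Or.inl hBpos) (Or.inl hBfin)).1 hratio).le
    have hdiffB : volume (B \ Ea) ≤ ENNReal.ofReal c * volume B := by
      have hsum : volume (B ∩ Ea) + volume (B \ Ea) = volume B :=
        measure_inter_add_diff B hEameas
      have hcle : ENNReal.ofReal c ≤ 1 := ENNReal.ofReal_le_one.2 hc1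
      have hone : (1 - ENNReal.ofReal c) + ENNReal.ofReal c = 1 := tsub_add_cancel_of_le hcle
      have hkey : (1 - ENNReal.ofReal c) * volume B + volume (B \ Ea)
          ≤ (1 - ENNReal.ofReal c) * volume B + ENNReal.ofReal c * volume B := by
        rw [← add_mul, hone, one_mul]
        calc (1 - ENNReal.ofReal c) * volume B + volume (B \ Ea)
            ≤ volume (Ea ∩ B) + volume (B \ Ea) := add_le_add_left hIlb _
          _ = volume (B ∩ Ea) + volume (B \ Ea) := by rw [inter_comm]
          _ = volume B := hsum
      have hne : (1 - ENNReal.ofReal c) * volume B ≠ ⊤ :=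
        ENNReal.mul_ne_top (by
          exact ne_top_of_le_ne_top ENNReal.one_ne_top tsub_le_self) hBfin
      exact (ENNReal.add_le_add_iff_left hne).mp hkey
    -- union bound
    have hcover : volume K ≤ volume (K ∩ Ea) + volume (B \ Ea) := by
      refine le_trans (measure_mono ?_) (measure_union_le _ _)
      intro p hp
      by_cases hpE : p ∈ Ea
      · exact Or.inl ⟨hp, hpE⟩
      · exact Or.inr ⟨hKB hp, hpE⟩
    -- real versions
    have hKEfin : volume (K ∩ Ea) ≠ ⊤ :=
      (lt_of_le_of_lt (measure_mono inter_subset_left) hKfin.lt_top).ne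
    have hBEfin : volume (B \ Ea) ≠ ⊤ :=
      (lt_of_le_of_lt (measure_mono diff_subset) hBfin.lt_top).ne
    set MK := (volume K).toReal with hMKdef
    have hMK_lb : r ^ d * vb.toReal ≤ MK := by
      have h := ENNReal.toReal_mono hKfin hKlb
      rwa [ENNReal.toReal_mul, ENNReal.toReal_ofReal (by positivity)] at h
    have hvbr : 0 < vb.toReal := ENNReal.toReal_pos hvb0 hvbt
    have hMKpos : 0 < MK := lt_of_lt_of_le (by positivity) hMK_lb
    have hcov2 : MK ≤ (volume (K ∩ Ea)).toReal + (volume (B \ Ea)).toReal := by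
      have h := ENNReal.toReal_mono (ENNReal.add_ne_top.2 ⟨hKEfin, hBEfin⟩) hcover
      rwa [ENNReal.toReal_add hKEfin hBEfin] at h
    have hBEr : (volume (B \ Ea)).toReal ≤ c * ((2 * s) ^ d * vb.toReal) := by
      have h := ENNReal.toReal_mono (ENNReal.mul_ne_top ENNReal.ofReal_ne_top hBfin) hdiffB
      rwa [ENNReal.toReal_mul, ENNReal.toReal_ofReal hcpos.le, hBvol, ENNReal.toReal_mul,
        ENNReal.toReal_ofReal (by positivity)] at h
    have hc2 : c * ((2 * s) ^ d * vb.toReal) ≤ r ^ d * vb.toReal / 2 := by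
      have h2 : (ε / 2) ^ d * (2 * s) ^ d = r ^ d := by
        rw [← mul_pow, hr]
        congr 1
        ring
      have h1 : c * (2 * s) ^ d ≤ r ^ d / 2 := by
        calc c * (2 * s) ^ d ≤ ((ε / 2) ^ d / 2) * (2 * s) ^ d :=
              mul_le_mul_of_nonneg_right hcd (by positivity)
          _ = ((ε / 2) ^ d * (2 * s) ^ d) / 2 := by ring
          _ = r ^ d / 2 := by rw [h2]
      calc c * ((2 * s) ^ d * vb.toReal) = (c * (2 * s) ^ d) * vb.toReal := by ring
        _ ≤ (r ^ d / 2) * vb.toReal := mul_le_mul_of_nonneg_right h1 hvbr.le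
        _ = r ^ d * vb.toReal / 2 := by ring
    have hKE_lb : MK / 2 ≤ (volume (K ∩ Ea)).toReal := by linarith
    -- the integral
    obtain ⟨C, hC⟩ := hφbdd
    have hint : IntegrableOn φ K volume := by
      refine Measure.integrableOn_of_bounded (M := C) hKfin hφmeas.aestronglyMeasurable ?_
      filter_upwards with p
      rw [Real.norm_eq_abs, abs_of_nonneg (hφnonneg p)]
      exact hC p
    have hintKE : a * (volume (K ∩ Ea)).toReal ≤ ∫ u in K ∩ Ea, φ u := by
      have := setIntegral_ge_of_const_le (hKmeas.inter hEameas) hKEfin (fun p hp => hp.2.1)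
        (hint.mono_set inter_subset_left)
      rwa [smul_eq_mul, mul_comm, measureReal_def] at this
    have hmono2 : ∫ u in K ∩ Ea, φ u ≤ ∫ u in K, φ u :=
      setIntegral_mono_set hint (Filter.Eventually.of_forall fun p => hφnonneg p)
        (HasSubset.Subset.eventuallyLE inter_subset_left)
    rw [lt_div_iff₀ hMKpos]
    calc a / 4 * MK < a * (MK / 2) := by nlinarith [mul_pos ha hMKpos]
      _ ≤ a * (volume (K ∩ Ea)).toReal := mul_le_mul_of_nonneg_left hKE_lb ha.le
      _ ≤ ∫ u in K ∩ Ea, φ u := hintKE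
      _ ≤ ∫ u in K, φ u := hmono2
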